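/- Polynomials a, b, c ∈ ℝ[x,y] satisfy the equivariance condition B(γp) = det(γ) · γ B(p) γᵀ for all p ∈ ℝ² and all γ ∈ O(2) (where B(p) = [[c(p), b(p)], [b(p), a(p)]]) if and only if there exists a polynomial q in one variable such that, with p₀ = q(x² + y²), one has a = 2xy·p₀, b = (x² − y²)·p₀, and c = −2xy·p₀. -/

import Mathlib

open Matrix

/-- The rotation matrix of angle `θ`. -/
noncomputable def rotMat (θ : ℝ) : Matrix (Fin 2) (Fin 2) ℝ :=
  !![Real.cos θ, -Real.sin θ; Real.sin θ, Real.cos θ]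

/-- The symmetric-matrix-valued map `B(p) = [[c(p), b(p)], [b(p), a(p)]]` of a quadratic
differential form with polynomial coefficients `a, b, c ∈ ℝ[x,y]`. -/
noncomputable def bdeMatrix (a b c : MvPolynomial (Fin 2) ℝ) (p : Fin 2 → ℝ) :
    Matrix (Fin 2) (Fin 2) ℝ :=
  !![MvPolynomial.eval p c, MvPolynomial.eval p b;
     MvPolynomial.eval p b, MvPolynomial.eval p a]

/-- `Re((x + iy)^m)` evaluated at `(x, y) = (v 0, v 1)`. -/
noncomputable def rePow (m : ℕ) (v : Fin 2 → ℝ) : ℝ :=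
  (((v 0 : ℂ) + Complex.I * (v 1 : ℂ)) ^ m).re

/-- `Im((x + iy)^m)` evaluated at `(x, y) = (v 0, v 1)`. -/
noncomputable def imPow (m : ℕ) (v : Fin 2 → ℝ) : ℝ :=
  (((v 0 : ℂ) + Complex.I * (v 1 : ℂ)) ^ m).im

lemma ext_off_zero (p q : Polynomial ℝ) (h : ∀ t : ℝ, t ≠ 0 → p.eval t = q.eval t) : p = q := by
  apply Polynomial.eq_of_infinite_eval_eq
  apply Set.Infinite.mono (s := {x : ℝ | x ≠ 0})
  · intro x hx; exact h x hx
  · simpa [Set.compl_def] using (Set.finite_singleton (0:ℝ)).infinite_compl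

lemma even_poly_aux : ∀ n : ℕ, ∀ h : Polynomial ℝ, h.natDegree ≤ n →
    (∀ t : ℝ, h.eval (-t) = h.eval t) → ∃ q : Polynomial ℝ, ∀ t : ℝ, h.eval t = q.eval (t^2) := by
  intro n
  induction n using Nat.strong_induction_on with
  | _ n ih =>
    intro h hdeg he
    by_cases h0 : h.natDegree = 0
    · obtain ⟨a, rfl⟩ := Polynomial.natDegree_eq_zero.mp h0
      exact ⟨Polynomial.C a, by simp⟩
    · set h' := h - Polynomial.C (h.eval 0) with hh'
      have he0' : h'.eval 0 = 0 := by simp [hh']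
      have he' : ∀ t : ℝ, h'.eval (-t) = h'.eval t := by intro t; simp [hh', he t]
      have hX : Polynomial.X ∣ h' := by
        rw [Polynomial.X_dvd_iff, Polynomial.coeff_zero_eq_eval_zero]; exact he0'
      obtain ⟨g, hg⟩ := hX
      have hgodd : ∀ t : ℝ, g.eval (-t) = -g.eval t := by
        have : g.comp (-Polynomial.X) = -g := by
          apply ext_off_zero
          intro t ht
          have h1 := he' t
          rw [hg] at h1
          simp only [Polynomial.eval_mul, Polynomial.eval_X] at h1
          have h2 : t * (-g.eval (-t)) = t * g.eval t := by linear_combination h1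
          have h3 := mul_left_cancel₀ ht h2
          simp [Polynomial.eval_comp]
          linarith
        intro t
        have := congrArg (Polynomial.eval t) this
        simpa [Polynomial.eval_comp] using this
      have hg0 : g.eval 0 = 0 := by have := hgodd 0; simp at this; linarith
      have hXg : Polynomial.X ∣ g := by
        rw [Polynomial.X_dvd_iff, Polynomial.coeff_zero_eq_eval_zero]; exact hg0
      obtain ⟨k, hk⟩ := hXg
      have hh'k : h' = Polynomial.X^2 * k := by rw [hg, hk]; ring
      have hkeven : ∀ t : ℝ, k.eval (-t) = k.eval t := by
        have : k.comp (-Polynomial.X) = k := by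
          apply ext_off_zero
          intro t ht
          have h1 := he' t
          rw [hh'k] at h1
          simp only [Polynomial.eval_mul, Polynomial.eval_pow, Polynomial.eval_X] at h1
          have ht2 : (t:ℝ)^2 ≠ 0 := pow_ne_zero _ ht
          have h2 : t^2 * k.eval (-t) = t^2 * k.eval t := by linear_combination h1
          have h3 := mul_left_cancel₀ ht2 h2
          simpa [Polynomial.eval_comp] using h3
        intro t
        have := congrArg (Polynomial.eval t) this
        simpa [Polynomial.eval_comp] using this
      by_cases hk0 : k = 0
      · have hC : h = Polynomial.C (h.eval 0) := by
          have hz : h' = 0 := by rw [hh'k, hk0]; ring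
          rw [hh'] at hz
          linear_combination (norm := ring_nf) hz
        exact absurd (by rw [hC]; simp) h0
      · have hdk : k.natDegree < n := by
          have hX2 : (Polynomial.X^2 : Polynomial ℝ) ≠ 0 := by
            exact pow_ne_zero _ Polynomial.X_ne_zero
          have hnd2 : h'.natDegree = 2 + k.natDegree := by
            rw [hh'k, Polynomial.natDegree_mul hX2 hk0]
            simp
          have hnd : h'.natDegree = h.natDegree := by rw [hh']; exact Polynomial.natDegree_sub_C
          omega
        obtain ⟨q', hq'⟩ := ih k.natDegree hdk k le_rfl hkeven
        refine ⟨Polynomial.C (h.eval 0) + Polynomial.X * q', fun t => ?_⟩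
        have hsplit : h.eval t = h'.eval t + h.eval 0 := by simp [hh']
        rw [hsplit, hh'k]
        simp [hq' t]
        ring

lemma even_zero_poly (h : Polynomial ℝ) (he : ∀ t : ℝ, h.eval (-t) = h.eval t)
    (h0 : h.eval 0 = 0) : ∃ q : Polynomial ℝ, ∀ t : ℝ, h.eval t = t^2 * q.eval (t^2) := by
  obtain ⟨q₀, hq₀⟩ := even_poly_aux h.natDegree h le_rfl he
  have hq00 : q₀.eval 0 = 0 := by have := hq₀ 0; simp at this; rw [← this]; exact h0
  have hdvd : Polynomial.X ∣ q₀ := by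
    rw [Polynomial.X_dvd_iff, Polynomial.coeff_zero_eq_eval_zero]; exact hq00
  obtain ⟨q, hq⟩ := hdvd
  exact ⟨q, fun t => by rw [hq₀ t, hq]; simp⟩
open Matrix

lemma star_fin_two (A : Matrix (Fin 2) (Fin 2) ℝ) :
    star A = !![A 0 0, A 1 0; A 0 1, A 1 1] := by
  funext i j
  rw [Matrix.star_eq_conjTranspose]
  fin_cases i <;> fin_cases j <;> simp [Matrix.conjTranspose_apply]

lemma rot_mem (θ : ℝ) : rotMat θ ∈ Matrix.orthogonalGroup (Fin 2) ℝ := by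
  rw [Matrix.mem_orthogonalGroup_iff]
  show (!![Real.cos θ, -Real.sin θ; Real.sin θ, Real.cos θ] : Matrix (Fin 2) (Fin 2) ℝ) * _ = 1
  have hsc := Real.sin_sq_add_cos_sq θ
  funext i j
  fin_cases i <;> fin_cases j <;>
    simp [rotMat, Matrix.mul_apply, Fin.sum_univ_two] <;> nlinarith [hsc]

lemma refl_mem : !![(1:ℝ), 0; 0, -1] ∈ Matrix.orthogonalGroup (Fin 2) ℝ := by
  rw [Matrix.mem_orthogonalGroup_iff]
  funext i j
  fin_cases i <;> fin_cases j <;> simp [Matrix.mul_apply, Fin.sum_univ_two]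

lemma rot_det (θ : ℝ) : (rotMat θ).det = 1 := by
  simp [rotMat, Matrix.det_fin_two_of]
  nlinarith [Real.sin_sq_add_cos_sq θ]

lemma refl_det : (!![(1:ℝ), 0; 0, -1]).det = -1 := by
  simp [Matrix.det_fin_two_of]

lemma rot_mulVec (θ : ℝ) (p : Fin 2 → ℝ) :
    (rotMat θ).mulVec p = ![Real.cos θ * p 0 - Real.sin θ * p 1,
      Real.sin θ * p 0 + Real.cos θ * p 1] := by
  funext i
  fin_cases i <;> simp [rotMat, Matrix.mulVec, dotProduct, Fin.sum_univ_two] <;> ring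

lemma refl_mulVec (p : Fin 2 → ℝ) :
    (!![(1:ℝ), 0; 0, -1]).mulVec p = ![p 0, -p 1] := by
  funext i
  fin_cases i <;> simp [Matrix.mulVec, dotProduct, Fin.sum_univ_two]

lemma rot_transpose (θ : ℝ) : (rotMat θ)ᵀ = !![Real.cos θ, Real.sin θ; -Real.sin θ, Real.cos θ] := by
  funext i j
  fin_cases i <;> fin_cases j <;> simp [rotMat, Matrix.transpose_apply]

lemma refl_transpose : (!![(1:ℝ), 0; 0, -1])ᵀ = !![(1:ℝ), 0; 0, -1] := by
  funext i j
  fin_cases i <;> fin_cases j <;> simp [Matrix.transpose_apply]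


/-- general form of `O(2)[SO(2)]`-equivariant quadratic differential forms:
`B(γp) = det(γ) · γ B(p) γᵀ` for all `γ ∈ O(2)` iff, with `p₀ = q(x² + y²)` for a
one-variable polynomial `q`, one has `a = 2xy·p₀`, `b = (x² − y²)·p₀`, `c = −2xy·p₀`. -/
theorem o2_so2_equivariant_quadratic_forms (a b c : MvPolynomial (Fin 2) ℝ) :
    (∀ γ : Matrix.orthogonalGroup (Fin 2) ℝ, ∀ p : Fin 2 → ℝ,
      bdeMatrix a b c ((γ : Matrix (Fin 2) (Fin 2) ℝ).mulVec p)
        = (γ : Matrix (Fin 2) (Fin 2) ℝ).det •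
            ((γ : Matrix (Fin 2) (Fin 2) ℝ) * bdeMatrix a b c p
              * (γ : Matrix (Fin 2) (Fin 2) ℝ)ᵀ))
    ↔ ∃ q : Polynomial ℝ,
        (∀ v : Fin 2 → ℝ, MvPolynomial.eval v a
          = 2 * v 0 * v 1 * Polynomial.eval (v 0 ^ 2 + v 1 ^ 2) q) ∧
        (∀ v : Fin 2 → ℝ, MvPolynomial.eval v b
          = (v 0 ^ 2 - v 1 ^ 2) * Polynomial.eval (v 0 ^ 2 + v 1 ^ 2) q) ∧
        (∀ v : Fin 2 → ℝ, MvPolynomial.eval v c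
          = -(2 * v 0 * v 1) * Polynomial.eval (v 0 ^ 2 + v 1 ^ 2) q) := by
  have hrep : ∀ v : Fin 2 → ℝ, ∃ r θ : ℝ,
      v = ![r * Real.cos θ, r * Real.sin θ] ∧ v 0 ^ 2 + v 1 ^ 2 = r ^ 2 := by
    intro v
    refine ⟨‖(⟨v 0, v 1⟩ : ℂ)‖, Complex.arg ⟨v 0, v 1⟩, ?_, ?_⟩
    · funext i
      fin_cases i
      · simpa using (Complex.norm_mul_cos_arg ⟨v 0, v 1⟩).symm
      · simpa using (Complex.norm_mul_sin_arg ⟨v 0, v 1⟩).symm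
    · rw [Complex.sq_norm, Complex.normSq_apply]
      ring
  constructor
  · intro H
    have hrefl : ∀ r : ℝ, MvPolynomial.eval ![r, (0:ℝ)] a = 0
        ∧ MvPolynomial.eval ![r, (0:ℝ)] c = 0 := by
      intro r
      have h := H ⟨_, refl_mem⟩ ![r, 0]
      have hco : ((⟨!![(1:ℝ),0;0,-1], refl_mem⟩ :
          Matrix.orthogonalGroup (Fin 2) ℝ) : Matrix (Fin 2) (Fin 2) ℝ)
          = !![(1:ℝ),0;0,-1] := rfl
      rw [hco, refl_det, refl_transpose] at h
      have hpt : (!![(1:ℝ), 0; 0, -1]).mulVec ![r, 0] = ![r, (0:ℝ)] := by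
        rw [refl_mulVec]; funext i; fin_cases i <;> simp
      rw [hpt] at h
      constructor
      · have h11 := congrFun (congrFun h 1) 1
        simp [bdeMatrix, Matrix.mul_apply, Matrix.smul_apply, Matrix.transpose_apply,
          Fin.sum_univ_two, smul_eq_mul] at h11
        linarith
      · have h00 := congrFun (congrFun h 0) 0
        simp [bdeMatrix, Matrix.mul_apply, Matrix.smul_apply, Matrix.transpose_apply,
          Fin.sum_univ_two, smul_eq_mul] at h00
        linarith
    have hrot : ∀ θ r : ℝ,
        MvPolynomial.eval ![r * Real.cos θ, r * Real.sin θ] a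
          = 2 * Real.sin θ * Real.cos θ * MvPolynomial.eval ![r, (0:ℝ)] b ∧
        MvPolynomial.eval ![r * Real.cos θ, r * Real.sin θ] b
          = (Real.cos θ ^ 2 - Real.sin θ ^ 2) * MvPolynomial.eval ![r, (0:ℝ)] b ∧
        MvPolynomial.eval ![r * Real.cos θ, r * Real.sin θ] c
          = -(2 * Real.sin θ * Real.cos θ) * MvPolynomial.eval ![r, (0:ℝ)] b := by
      intro θ r
      have h := H ⟨_, rot_mem θ⟩ ![r, 0]
      have hco : ((⟨rotMat θ, rot_mem θ⟩ :
          Matrix.orthogonalGroup (Fin 2) ℝ) : Matrix (Fin 2) (Fin 2) ℝ) = rotMat θ := rfl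
      rw [hco, rot_det, one_smul, rot_transpose] at h
      have hpt : (rotMat θ).mulVec ![r, 0] = ![r * Real.cos θ, r * Real.sin θ] := by
        rw [rot_mulVec]; funext i; fin_cases i <;> simp <;> ring
      rw [hpt] at h
      obtain ⟨ha0, hc0⟩ := hrefl r
      refine ⟨?_, ?_, ?_⟩
      · have h11 := congrFun (congrFun h 1) 1
        simp [bdeMatrix, rotMat, Matrix.mul_apply, Matrix.transpose_apply,
          Fin.sum_univ_two, ha0, hc0] at h11
        rw [h11]; ring
      · have h01 := congrFun (congrFun h 0) 1
        simp [bdeMatrix, rotMat, Matrix.mul_apply, Matrix.transpose_apply,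
          Fin.sum_univ_two, ha0, hc0] at h01
        rw [h01]; ring
      · have h00 := congrFun (congrFun h 0) 0
        simp [bdeMatrix, rotMat, Matrix.mul_apply, Matrix.transpose_apply,
          Fin.sum_univ_two, ha0, hc0] at h00
        rw [h00]; ring
    obtain ⟨q, hq⟩ : ∃ q : Polynomial ℝ, ∀ r : ℝ,
        MvPolynomial.eval ![r, (0:ℝ)] b = r ^ 2 * q.eval (r ^ 2) := by
      set hp : Polynomial ℝ := MvPolynomial.aeval ![Polynomial.X, (0 : Polynomial ℝ)] b
        with hh
      have heval : ∀ t : ℝ, hp.eval t = MvPolynomial.eval ![t, (0:ℝ)] b := by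
        intro t
        have key := MvPolynomial.eval₂_comp_left (Polynomial.evalRingHom t)
          Polynomial.C ![Polynomial.X, (0:Polynomial ℝ)] b
        have h1 : (Polynomial.evalRingHom t).comp Polynomial.C = RingHom.id ℝ := by
          ext x; simp
        have h2 : (⇑(Polynomial.evalRingHom t)) ∘ ![Polynomial.X, (0:Polynomial ℝ)]
            = ![t, (0:ℝ)] := by
          funext i; fin_cases i <;> simp
        rw [h1, h2] at key
        simp only [Polynomial.coe_evalRingHom] at key
        rw [hh, MvPolynomial.aeval_def, Polynomial.algebraMap_eq, key]
        rfl
      have heven : ∀ t : ℝ, hp.eval (-t) = hp.eval t := by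
        intro t
        rw [heval, heval]
        have h := (hrot Real.pi t).2.1
        have hpt : (![t * Real.cos Real.pi, t * Real.sin Real.pi] : Fin 2 → ℝ)
            = ![-t, (0:ℝ)] := by
          funext i; fin_cases i <;> simp
        rw [hpt] at h
        rw [h]; simp
      have h0 : hp.eval 0 = 0 := by
        rw [heval]
        have h := (hrot (Real.pi/4) 0).2.1
        have hpt : (![(0:ℝ) * Real.cos (Real.pi/4), 0 * Real.sin (Real.pi/4)] : Fin 2 → ℝ)
            = ![(0:ℝ), (0:ℝ)] := by
          funext i; fin_cases i <;> simp
        rw [hpt] at h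
        rw [h, Real.cos_pi_div_four, Real.sin_pi_div_four]
        norm_num
      obtain ⟨q, hq⟩ := even_zero_poly hp heven h0
      exact ⟨q, fun r => by rw [← heval, hq]⟩
    refine ⟨q, ?_, ?_, ?_⟩ <;> intro v <;>
      obtain ⟨r, θ, hvv, hr2⟩ := hrep v <;>
      rw [hr2, hvv] <;>
      simp only [Matrix.cons_val_zero, Matrix.cons_val_one, Matrix.head_cons]
    · rw [(hrot θ r).1, hq r]; ring
    · rw [(hrot θ r).2.1, hq r]; ring
    · rw [(hrot θ r).2.2, hq r]; ring
  · rintro ⟨q, ha, hb, hc⟩ γ p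
    obtain ⟨g, hg⟩ := γ
    have hco : ((⟨g, hg⟩ : Matrix.orthogonalGroup (Fin 2) ℝ) :
        Matrix (Fin 2) (Fin 2) ℝ) = g := rfl
    rw [hco]
    have h1 : star g * g = 1 := (Matrix.mem_orthogonalGroup_iff' (Fin 2) ℝ).mp hg
    rw [star_fin_two] at h1
    have hc1 : g 0 0 ^ 2 + g 1 0 ^ 2 = 1 := by
      have h := congrFun (congrFun h1 0) 0
      simp [Matrix.mul_apply, Fin.sum_univ_two] at h
      nlinarith [h]
    have hc2 : g 0 0 * g 0 1 + g 1 0 * g 1 1 = 0 := by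
      have h := congrFun (congrFun h1 0) 1
      simp [Matrix.mul_apply, Fin.sum_univ_two] at h
      nlinarith [h]
    have hc3 : g 0 1 ^ 2 + g 1 1 ^ 2 = 1 := by
      have h := congrFun (congrFun h1 1) 1
      simp [Matrix.mul_apply, Fin.sum_univ_two] at h
      nlinarith [h]
    have hdet : g.det = g 0 0 * g 1 1 - g 0 1 * g 1 0 := Matrix.det_fin_two g
    have hd2 : g.det * g.det = 1 := by rw [hdet]; nlinarith [hc1, hc2, hc3]
    have h11 : g 1 1 = g.det * g 0 0 := by
      rw [hdet]; linear_combination (-(g 1 1)) * hc1 + g 1 0 * hc2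
    have h01 : g 0 1 = -(g.det * g 1 0) := by
      rw [hdet]; linear_combination (-(g 0 1)) * hc1 + g 0 0 * hc2
    have hm0 : g.mulVec p 0 = g 0 0 * p 0 + g 0 1 * p 1 := by
      simp [Matrix.mulVec, dotProduct, Fin.sum_univ_two]
    have hm1 : g.mulVec p 1 = g 1 0 * p 0 + g 1 1 * p 1 := by
      simp [Matrix.mulVec, dotProduct, Fin.sum_univ_two]
    have hrad : g.mulVec p 0 ^ 2 + g.mulVec p 1 ^ 2 = p 0 ^ 2 + p 1 ^ 2 := by
      rw [hm0, hm1]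
      linear_combination (p 0 ^ 2) * hc1 + (2 * p 0 * p 1) * hc2 + (p 1 ^ 2) * hc3
    have hd1 : g.det = 1 ∨ g.det = -1 := mul_self_eq_one_iff.mp hd2
    funext i j
    fin_cases i <;> fin_cases j <;>
    · simp only [bdeMatrix, Matrix.smul_apply, Matrix.mul_apply, Matrix.transpose_apply,
        Fin.sum_univ_two, smul_eq_mul, Matrix.cons_val', Matrix.cons_val_zero,
        Matrix.cons_val_one, Matrix.head_cons, Matrix.head_fin_const, Matrix.empty_val',
        Matrix.cons_val_fin_one, Matrix.of_apply, Fin.zero_eta, Fin.mk_one, Fin.isValue]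
      simp only [ha, hb, hc]
      rw [hrad]
      rw [hm0, hm1, h11, h01]
      rcases hd1 with hd | hd <;> rw [hd] <;> ring
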